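/- Let E be a real Banach space, let τ_1, …, τ_N > 0 be time steps, fix j with 2 ≤ j ≤ N, and let u : ℝ → E be three times continuously differentiable on [t_{j−2}, t_j]. Define the BDF2 truncation error η^j := b^{(j)}_0·(u(t_j) − u(t_{j−1})) + b^{(j)}_1·(u(t_{j−1}) − u(t_{j−2})) − u'(t_j). Then ‖η^j‖ ≤ b^{(j)}_0·τ_j²·∫_{t_{j−1}}^{t_j} ‖u'''(t)‖ dt + (r_j² τ_{j−1}²/(2(1+2r_j)))·b^{(j)}_0·∫_{t_{j−2}}^{t_{j−1}} ‖u'''(t)‖ dt. -/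

import Mathlib

open Finset

/-- BDF2 convolution kernels `b^{(n)}_j` built from the step sizes `τ`. -/
noncomputable def bdf2 (τ : ℕ → ℝ) (n j : ℕ) : ℝ :=
  if n = 1 then (if j = 0 then 1 / τ 1 else 0)
  else if j = 0 then (1 + 2 * (τ n / τ (n - 1))) / (τ n * (1 + τ n / τ (n - 1)))
  else if j = 1 then -(τ n / τ (n - 1)) ^ 2 / (τ n * (1 + τ n / τ (n - 1)))
  else 0

/-- DOC kernels: `doc τ n g = θ^{(n)}_g`, defined by the recursive procedure
`θ^{(n)}_0 = 1/b^{(n)}_0`, `θ^{(n)}_{n-k} = -(1/b^{(k)}_0) ∑_{j=k+1}^n θ^{(n)}_{n-j} b^{(j)}_{j-k}`. -/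
noncomputable def doc (τ : ℕ → ℝ) (n : ℕ) : ℕ → ℝ
  | 0 => 1 / bdf2 τ n 0
  | (g + 1) =>
    -(1 / bdf2 τ (n - (g + 1)) 0) *
      ∑ i ∈ (Finset.range (g + 1)).attach,
        doc τ n i.1 * bdf2 τ (n - i.1) (g + 1 - i.1)
  decreasing_by exact Finset.mem_range.mp i.2

/-- The variable-step BDF2 formula `D_2 v^n = ∑_{k=1}^n b^{(n)}_{n-k} (v^k - v^{k-1})`. -/
noncomputable def D2 {V : Type*} [AddCommGroup V] [Module ℝ V]
    (τ : ℕ → ℝ) (v : ℕ → V) (n : ℕ) : V :=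
  ∑ k ∈ Finset.Icc 1 n, bdf2 τ n (n - k) • (v k - v (k - 1))

/-- Time levels `t_n = τ_1 + ⋯ + τ_n`. -/
noncomputable def tlv (τ : ℕ → ℝ) (n : ℕ) : ℝ := ∑ i ∈ Finset.Icc 1 n, τ i

lemma tlv_succ (τ : ℕ → ℝ) (n : ℕ) : tlv τ (n+1) = tlv τ n + τ (n+1) := by
  simp [tlv, Finset.sum_Icc_succ_top (Nat.le_add_left 1 n)]

set_option maxHeartbeats 1600000 in
/-- bound for the BDF2 truncation error `η^j` (`j ≥ 2`). -/
theorem bdf2_truncation_error_bound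
    {E : Type*} [NormedAddCommGroup E] [NormedSpace ℝ E] [CompleteSpace E]
    (N : ℕ) (τ : ℕ → ℝ) (hτ : ∀ k, 1 ≤ k → k ≤ N → 0 < τ k)
    (j : ℕ) (hj2 : 2 ≤ j) (hjN : j ≤ N)
    (u u' u'' u''' : ℝ → E)
    (hu' : ∀ x ∈ Set.Icc (tlv τ (j - 2)) (tlv τ j),
      HasDerivWithinAt u (u' x) (Set.Icc (tlv τ (j - 2)) (tlv τ j)) x)
    (hu'' : ∀ x ∈ Set.Icc (tlv τ (j - 2)) (tlv τ j),
      HasDerivWithinAt u' (u'' x) (Set.Icc (tlv τ (j - 2)) (tlv τ j)) x)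
    (hu''' : ∀ x ∈ Set.Icc (tlv τ (j - 2)) (tlv τ j),
      HasDerivWithinAt u'' (u''' x) (Set.Icc (tlv τ (j - 2)) (tlv τ j)) x)
    (hcont : ContinuousOn u''' (Set.Icc (tlv τ (j - 2)) (tlv τ j))) :
    ‖bdf2 τ j 0 • (u (tlv τ j) - u (tlv τ (j - 1))) +
        bdf2 τ j 1 • (u (tlv τ (j - 1)) - u (tlv τ (j - 2))) - u' (tlv τ j)‖ ≤
      bdf2 τ j 0 * τ j ^ 2 * (∫ t in (tlv τ (j - 1))..(tlv τ j), ‖u''' t‖) +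
        (τ j / τ (j - 1)) ^ 2 * τ (j - 1) ^ 2 / (2 * (1 + 2 * (τ j / τ (j - 1)))) *
          bdf2 τ j 0 * (∫ t in (tlv τ (j - 2))..(tlv τ (j - 1)), ‖u''' t‖) := by
  have hτ1 : 0 < τ (j-1) := hτ (j-1) (by omega) (by omega)
  have hτ2 : 0 < τ j := hτ j (by omega) (by omega)
  set p := τ (j-1) with hp
  set q := τ j with hq
  set t0 := tlv τ (j-2) with ht0
  set t1 := tlv τ (j-1) with ht1
  set t2 := tlv τ j with ht2
  set b0 := bdf2 τ j 0 with hb0d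
  set b1 := bdf2 τ j 1 with hb1d
  have hp0 : p ≠ 0 := ne_of_gt hτ1
  have hq0 : q ≠ 0 := ne_of_gt hτ2
  have e1 : t1 = t0 + p := by
    have h := tlv_succ τ (j-2)
    rw [show (j-2)+1 = j-1 by omega] at h
    rw [ht1, ht0, hp]; exact h
  have e2 : t2 = t1 + q := by
    have h := tlv_succ τ (j-1)
    rw [show (j-1)+1 = j by omega] at h
    rw [ht2, ht1, hq]; exact h
  have ht01 : t0 ≤ t1 := by linarith
  have ht12 : t1 ≤ t2 := by linarith
  have ht02 : t0 ≤ t2 := by linarith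
  have hj1 : j ≠ 1 := by omega
  have hb0 : b0 = (p + 2*q)/(q*(p+q)) := by
    rw [hb0d, bdf2, if_neg hj1, if_pos rfl, ← hp, ← hq]
    field_simp
    try ring
  have hb1 : b1 = -(q/(p*(p+q))) := by
    rw [hb1d, bdf2, if_neg hj1, if_neg one_ne_zero, if_pos rfl, ← hp, ← hq]
    field_simp
    try ring
  have hcu : ContinuousOn u (Set.Icc t0 t2) := fun x hx => (hu' x hx).continuousWithinAt
  have hcu' : ContinuousOn u' (Set.Icc t0 t2) := fun x hx => (hu'' x hx).continuousWithinAt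
  have hcu'' : ContinuousOn u'' (Set.Icc t0 t2) := fun x hx => (hu''' x hx).continuousWithinAt
  have hker : ∀ c : ℝ, Continuous (fun s : ℝ => (c - s)^2/2) := fun c =>
    ((continuous_const.sub continuous_id).pow 2).div_const 2
  -- integrability of the kernel-weighted third derivative
  have hintg : ∀ (g : ℝ → ℝ), Continuous g → ∀ a b : ℝ, t0 ≤ a → a ≤ b → b ≤ t2 →
      IntervalIntegrable (fun s => g s • u''' s) MeasureTheory.volume a b := by
    intro g hg a b ha hab hb
    refine ContinuousOn.intervalIntegrable_of_Icc hab ?_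
    exact (hg.continuousOn).smul (hcont.mono (Set.Icc_subset_Icc ha hb))
  -- Taylor expansion with integral remainder
  have taylor : ∀ a b : ℝ, t0 ≤ a → a ≤ b → b ≤ t2 →
      u b + (a - b) • u' b + ((a - b)^2/2) • u'' b - u a
        = ∫ s in a..b, ((a - s)^2/2) • u''' s := by
    intro a b ha hab hb
    have hsub : Set.Icc a b ⊆ Set.Icc t0 t2 := Set.Icc_subset_Icc ha hb
    set φ : ℝ → E := fun s => u s + (a - s) • u' s + ((a - s)^2/2) • u'' s with hφ
    have hder : ∀ x ∈ Set.Ioo a b, HasDerivAt φ (((a - x)^2/2) • u''' x) x := by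
      intro x hx
      have hxmem : Set.Icc t0 t2 ∈ nhds x :=
        Icc_mem_nhds (by linarith [hx.1]) (by linarith [hx.2])
      have hxS : x ∈ Set.Icc t0 t2 := ⟨by linarith [hx.1], by linarith [hx.2]⟩
      have h1 : HasDerivAt u (u' x) x := (hu' x hxS).hasDerivAt hxmem
      have h2 : HasDerivAt u' (u'' x) x := (hu'' x hxS).hasDerivAt hxmem
      have h3 : HasDerivAt u'' (u''' x) x := (hu''' x hxS).hasDerivAt hxmem
      have hc : HasDerivAt (fun s : ℝ => a - s) (-1) x := by
        simpa using (hasDerivAt_id x).const_sub a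
      have hc2 : HasDerivAt (fun s : ℝ => (a - s)^2/2) (-(a - x)) x := by
        have := (hc.pow 2).div_const 2
        refine this.congr_deriv ?_
        ring
      have hd := (h1.add (hc.smul h2)).add (hc2.smul h3)
      refine hd.congr_deriv ?_
      module
    have hcontφ : ContinuousOn φ (Set.Icc a b) := by
      refine ((hcu.mono hsub).add ?_).add ?_
      · exact ((continuous_const.sub continuous_id).continuousOn).smul (hcu'.mono hsub)
      · exact (((continuous_const.sub continuous_id).pow 2).div_const 2).continuousOn.smul
          (hcu''.mono hsub)
    have hint : IntervalIntegrable (fun s => ((a - s)^2/2) • u''' s)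
        MeasureTheory.volume a b :=
      hintg _ (hker a) a b ha hab hb
    have hFTC := intervalIntegral.integral_eq_sub_of_hasDeriv_right_of_le hab hcontφ
      (fun x hx => (hder x hx).hasDerivWithinAt) hint
    rw [hFTC, hφ]
    simp
  set R1 : E := ∫ s in t1..t2, ((t1 - s)^2/2) • u''' s with hR1
  set R2a : E := ∫ s in t0..t1, ((t0 - s)^2/2) • u''' s with hR2a
  set R2b : E := ∫ s in t1..t2, ((t0 - s)^2/2) • u''' s with hR2b
  have eq1 : u t2 - u t1 = q • u' t2 - (q^2/2) • u'' t2 + R1 := by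
    have h := taylor t1 t2 ht01 ht12 le_rfl
    have ht : t1 - t2 = -q := by linarith
    rw [ht] at h
    rw [hR1, ← h]
    match_scalars <;> ring
  have eq2 : u t2 - u t0 = (p+q) • u' t2 - ((p+q)^2/2) • u'' t2 + (R2a + R2b) := by
    have h := taylor t0 t2 le_rfl ht02 le_rfl
    have hsplit : R2a + R2b = ∫ s in t0..t2, ((t0 - s)^2/2) • u''' s :=
      intervalIntegral.integral_add_adjacent_intervals
        (hintg _ (hker t0) t0 t1 le_rfl ht01 ht12)
        (hintg _ (hker t0) t1 t2 ht01 ht12 le_rfl)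
    have ht : t0 - t2 = -(p+q) := by linarith
    rw [ht] at h
    rw [hR2a, hR2b, hsplit, ← h]
    match_scalars <;> ring
  have h3 : u t1 - u t0 = (u t2 - u t0) - (u t2 - u t1) := by abel
  set K : ℝ → ℝ := fun s => (b0 - b1) * ((t1 - s)^2/2) + b1 * ((t0 - s)^2/2) with hK
  have hKcont : Continuous K := by
    rw [hK]
    exact (continuous_const.mul (hker t1)).add (continuous_const.mul (hker t0))
  have key : b0 • (u t2 - u t1) + b1 • (u t1 - u t0) - u' t2
      = (∫ s in t1..t2, K s • u''' s) + b1 • R2a := by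
    have hcomb : (∫ s in t1..t2, K s • u''' s) = (b0 - b1) • R1 + b1 • R2b := by
      have hfun : (fun s => K s • u''' s)
          = fun s => ((b0 - b1) * ((t1 - s)^2/2)) • u''' s
              + (b1 * ((t0 - s)^2/2)) • u''' s := by
        funext s
        rw [hK, add_smul]
      have hi1 : IntervalIntegrable (fun s => ((b0 - b1) * ((t1 - s)^2/2)) • u''' s)
          MeasureTheory.volume t1 t2 :=
        hintg _ (continuous_const.mul (hker t1)) t1 t2 ht01 ht12 le_rfl
      have hi2 : IntervalIntegrable (fun s => (b1 * ((t0 - s)^2/2)) • u''' s)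
          MeasureTheory.volume t1 t2 :=
        hintg _ (continuous_const.mul (hker t0)) t1 t2 ht01 ht12 le_rfl
      rw [hfun, intervalIntegral.integral_add hi1 hi2, hR1, hR2b]
      simp only [mul_smul]
      rw [intervalIntegral.integral_smul, intervalIntegral.integral_smul]
    rw [hcomb, h3, eq1, eq2]
    have hcoef1 : b0 * q + b1 * ((p+q) - q) - 1 = 0 := by
      rw [hb0, hb1]; field_simp; ring
    have hcoef2 : b0 * (q^2/2) + b1 * (((p+q)^2 - q^2)/2) = 0 := by
      rw [hb0, hb1]; field_simp; ring
    match_scalars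
    · linarith [hcoef1]
    · linarith [hcoef2]
    · ring
    · ring
    · ring
  rw [key]
  -- kernel bound
  have hC : b0 * q^2 = q*(p+2*q)/(p+q) := by
    rw [hb0]; field_simp
  have hCpos : 0 < b0 * q^2 := by rw [hC]; positivity
  have hKbound : ∀ s ∈ Set.Icc t1 t2, |K s| ≤ b0 * q^2 := by
    intro s hs
    have hx0 : 0 ≤ s - t1 := by linarith [hs.1]
    have hxq : s - t1 ≤ q := by linarith [hs.2]
    have hKform : K s = (p*((s-t1)-q)*((p+2*q)*(s-t1)+p*q)) / (2*p*q*(p+q)) := by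
      rw [hK]
      have h0 : t0 = t1 - p := by linarith
      rw [hb0, hb1, h0]
      field_simp
      ring
    have hDpos : (0:ℝ) < 2*p*q*(p+q) := by positivity
    rw [hKform, abs_div, abs_of_pos hDpos, div_le_iff₀ hDpos]
    have hCD : b0*q^2 * (2*p*q*(p+q)) = 2*p*q^2*(p+2*q) := by
      rw [hC]; field_simp
    rw [hCD, abs_le]
    have h4 : (0:ℝ) ≤ (p+2*q)*(s-t1) + p*q :=
      add_nonneg (mul_nonneg (by positivity) hx0) (by positivity)
    have hA : q - (s - t1) ≤ q := by linarith
    have hB : (p+2*q)*(s-t1) + p*q ≤ 2*q*(p+q) := by nlinarith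
    have hprod : (q - (s-t1)) * ((p+2*q)*(s-t1) + p*q) ≤ q * (2*q*(p+q)) :=
      mul_le_mul hA hB h4 hτ2.le
    constructor
    · nlinarith [mul_le_mul_of_nonneg_left hprod hτ1.le,
        mul_pos (mul_pos hτ1 hτ2) (mul_pos hτ2 hτ2)]
    · nlinarith [mul_nonneg (mul_nonneg hτ1.le (show (0:ℝ) ≤ q - (s-t1) by linarith)) h4,
        mul_pos (mul_pos hτ1 hτ2) (mul_pos hτ2 hτ2)]
  have hnormcont : ContinuousOn (fun s => ‖u''' s‖) (Set.Icc t0 t2) := hcont.norm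
  -- first bound
  have bound1 : ‖∫ s in t1..t2, K s • u''' s‖ ≤ b0 * q^2 * ∫ s in t1..t2, ‖u''' s‖ := by
    calc ‖∫ s in t1..t2, K s • u''' s‖ ≤ ∫ s in t1..t2, ‖K s • u''' s‖ :=
          intervalIntegral.norm_integral_le_integral_norm ht12
      _ ≤ ∫ s in t1..t2, b0 * q^2 * ‖u''' s‖ := by
          refine intervalIntegral.integral_mono_on ht12 ?_ ?_ ?_
          · refine ContinuousOn.intervalIntegrable_of_Icc ht12 ?_
            exact (hKcont.continuousOn.smul
              (hcont.mono (Set.Icc_subset_Icc ht01 le_rfl))).norm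
          · refine ContinuousOn.intervalIntegrable_of_Icc ht12 ?_
            exact continuousOn_const.mul (hnormcont.mono (Set.Icc_subset_Icc ht01 le_rfl))
          · intro s hs
            rw [norm_smul, Real.norm_eq_abs]
            exact mul_le_mul_of_nonneg_right (hKbound s hs) (norm_nonneg _)
      _ = b0 * q^2 * ∫ s in t1..t2, ‖u''' s‖ := by
          rw [← intervalIntegral.integral_const_mul]
  -- second bound
  have hI2 : (0:ℝ) ≤ ∫ s in t0..t1, ‖u''' s‖ :=
    intervalIntegral.integral_nonneg ht01 (fun s _ => norm_nonneg _)
  have bound2 : ‖b1 • R2a‖ ≤ (q/p)^2 * p^2 / (2*(1 + 2*(q/p))) * b0 * ∫ s in t0..t1, ‖u''' s‖ := by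
    have hb1abs : |b1| = q/(p*(p+q)) := by
      rw [hb1, abs_neg, abs_of_pos (by positivity)]
    have hR2abound : ‖R2a‖ ≤ p^2/2 * ∫ s in t0..t1, ‖u''' s‖ := by
      calc ‖R2a‖ ≤ ∫ s in t0..t1, ‖((t0 - s)^2/2) • u''' s‖ :=
            intervalIntegral.norm_integral_le_integral_norm ht01
        _ ≤ ∫ s in t0..t1, p^2/2 * ‖u''' s‖ := by
            refine intervalIntegral.integral_mono_on ht01 ?_ ?_ ?_
            · refine ContinuousOn.intervalIntegrable_of_Icc ht01 ?_
              refine ContinuousOn.norm ?_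
              exact (hker t0).continuousOn.smul
                (hcont.mono (Set.Icc_subset_Icc le_rfl ht12))
            · refine ContinuousOn.intervalIntegrable_of_Icc ht01 ?_
              exact continuousOn_const.mul (hnormcont.mono (Set.Icc_subset_Icc le_rfl ht12))
            · intro s hs
              rw [norm_smul, Real.norm_eq_abs]
              refine mul_le_mul_of_nonneg_right ?_ (norm_nonneg _)
              rw [abs_of_nonneg (by positivity)]
              have h1 : t0 ≤ s := hs.1
              have h2 : s ≤ t1 := hs.2
              nlinarith
        _ = p^2/2 * ∫ s in t0..t1, ‖u''' s‖ := by
            rw [← intervalIntegral.integral_const_mul]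
    have hcoef : |b1| * (p^2/2) = (q/p)^2 * p^2 / (2*(1 + 2*(q/p))) * b0 := by
      have h2q : (1 + 2*(q/p)) ≠ 0 := by positivity
      have hpq : p + q ≠ 0 := by positivity
      rw [hb1abs, hb0]
      field_simp
    calc ‖b1 • R2a‖ = |b1| * ‖R2a‖ := by rw [norm_smul, Real.norm_eq_abs]
      _ ≤ |b1| * (p^2/2 * ∫ s in t0..t1, ‖u''' s‖) :=
          mul_le_mul_of_nonneg_left hR2abound (abs_nonneg _)
      _ = |b1| * (p^2/2) * ∫ s in t0..t1, ‖u''' s‖ := by ring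
      _ = (q/p)^2 * p^2 / (2*(1 + 2*(q/p))) * b0 * ∫ s in t0..t1, ‖u''' s‖ := by
          rw [hcoef]
  calc ‖(∫ s in t1..t2, K s • u''' s) + b1 • R2a‖
      ≤ ‖∫ s in t1..t2, K s • u''' s‖ + ‖b1 • R2a‖ := norm_add_le _ _
    _ ≤ b0 * q^2 * (∫ s in t1..t2, ‖u''' s‖)
        + (q/p)^2 * p^2 / (2*(1 + 2*(q/p))) * b0 * ∫ s in t0..t1, ‖u''' s‖ :=
        add_le_add bound1 bound2
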